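/- For every natural number n ≥ 1, 24 times the number of pairs (A,B) of Finsets of Fin(n+1) satisfying A ≼ B and A.card + B.card = 4 equals (n−1)·n·(n+1)·(5n+2); that is, the number of 3-simplices of the standard cylinder Cil Γ₊[n] equals (n−1)n(n+1)(5n+2)/24 (sequence A212415). -/

import Mathlib

open Finset

section Aux

private lemma take_drop_le' {α : Type*} [LinearOrder α] {l : List α} (hs : l.Pairwise (· ≤ ·)) {k k' : ℕ} (hk : k ≤ k' + 1)
    {a b : α} (ha : a ∈ l.take k) (hb : b ∈ l.drop k') : a ≤ b := by
  rw [List.mem_take_iff_getElem] at ha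
  rw [List.mem_drop_iff_getElem] at hb
  obtain ⟨i, hi, rfl⟩ := ha
  obtain ⟨j, hj, rfl⟩ := hb
  have hil : i < l.length := lt_of_lt_of_le hi (min_le_right _ _)
  have hik : i < k := lt_of_lt_of_le hi (min_le_left _ _)
  rcases lt_or_eq_of_le (show i ≤ k' + j by omega) with h | h
  · exact List.pairwise_iff_getElem.mp hs i (k' + j) hil (by omega) h
  · exact le_of_eq (by congr 1)

private lemma left_unique {α : Type*} [LinearOrder α] [DecidableEq α] {A₁ B₁ A₂ B₂ : Finset α}
    (h1 : ∀ a ∈ A₁, ∀ b ∈ B₁, a ≤ b) (h2 : ∀ a ∈ A₂, ∀ b ∈ B₂, a ≤ b)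
    (hU : A₁ ∪ B₁ = A₂ ∪ B₂) (hc : A₁.card = A₂.card) : A₁ = A₂ := by
  have key : ∀ {C₁ D₁ C₂ D₂ : Finset α}, (∀ a ∈ C₁, ∀ b ∈ D₁, a ≤ b) →
      (∀ a ∈ C₂, ∀ b ∈ D₂, a ≤ b) → C₁ ∪ D₁ = C₂ ∪ D₂ →
      ∀ x ∈ C₁, x ∉ C₂ → C₂ ⊆ C₁ := by
    intro C₁ D₁ C₂ D₂ g1 g2 gU x hx hx2
    have hxB₂ : x ∈ D₂ := by
      have hxU : x ∈ C₂ ∪ D₂ := gU ▸ mem_union_left _ hx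
      rcases mem_union.mp hxU with h | h
      · exact absurd h hx2
      · exact h
    intro a ha
    have hax : a ≤ x := g2 a ha x hxB₂
    have haU : a ∈ C₁ ∪ D₁ := by rw [gU]; exact mem_union_left _ ha
    rcases mem_union.mp haU with h | h
    · exact h
    · have hxa : x ≤ a := g1 x hx a h
      have : a = x := le_antisymm hax hxa
      rwa [this]
  by_contra hne
  have hns : ¬ A₁ ⊆ A₂ := fun hsub => hne (eq_of_subset_of_card_le hsub hc.ge)
  obtain ⟨x, hx1, hx2⟩ := not_subset.mp hns
  have hsub : A₂ ⊆ A₁ := key h1 h2 hU x hx1 hx2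
  exact hne (eq_of_subset_of_card_le hsub hc.le).symm

private lemma B_eq_of_inter {α : Type*} [DecidableEq α] {A B : Finset α} {p : α} (hAB : A ∩ B = {p}) :
    B = ((A ∪ B) \ A) ∪ {p} := by
  ext x
  simp only [mem_union, mem_sdiff, mem_singleton]
  constructor
  · intro hx
    by_cases hxA : x ∈ A
    · right
      have : x ∈ A ∩ B := mem_inter.mpr ⟨hxA, hx⟩
      rw [hAB, mem_singleton] at this; exact this
    · exact Or.inl ⟨Or.inr hx, hxA⟩
  · rintro (⟨h | h, hna⟩ | rfl)
    · exact absurd h hna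
    · exact h
    · have hp : x ∈ A ∩ B := by rw [hAB]; exact mem_singleton_self _
      exact (mem_inter.mp hp).2

private lemma union_take_drop {α : Type*} [DecidableEq α] (l : List α) {k k' : ℕ} (h : k' ≤ k) :
    (l.take k).toFinset ∪ (l.drop k').toFinset = l.toFinset := by
  ext x
  simp only [mem_union, List.mem_toFinset]
  constructor
  · rintro (h | h)
    · exact List.take_subset _ _ h
    · exact List.drop_subset _ _ h
  · intro hx
    obtain ⟨i, hi, rfl⟩ := List.mem_iff_getElem.mp hx
    by_cases hik : i < k
    · exact Or.inl (List.mem_take_iff_getElem.mpr ⟨i, by omega, rfl⟩)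
    · refine Or.inr (List.mem_drop_iff_getElem.mpr ⟨i - k', by omega, ?_⟩)
      congr 1; omega

private lemma take_toFinset_card {α : Type*} [DecidableEq α] (l : List α) (hnd : l.Nodup) (k : ℕ) :
    (l.take k).toFinset.card = min k l.length := by
  rw [List.toFinset_card_of_nodup (hnd.sublist (List.take_sublist _ _)), List.length_take]

private lemma drop_toFinset_card {α : Type*} [DecidableEq α] (l : List α) (hnd : l.Nodup) (k : ℕ) :
    (l.drop k).toFinset.card = l.length - k := by
  rw [List.toFinset_card_of_nodup (hnd.sublist (List.drop_sublist _ _)), List.length_drop]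

end Aux

theorem cyl_three_simplices_A212415 (n : ℕ) (hn : 1 ≤ n) :
    24 * Nat.card {AB : Finset (Fin (n + 1)) × Finset (Fin (n + 1)) //
        ((AB.1 ∩ AB.2).card ≤ 1 ∧ ∀ a ∈ AB.1, ∀ b ∈ AB.2, a ≤ b) ∧
          AB.1.card + AB.2.card = 4} =
      (n - 1) * n * (n + 1) * (5 * n + 2) := by
  classical
  rw [Nat.card_eq_fintype_card, Fintype.card_subtype]
  set F := Finset (Fin (n + 1))
  set S : Finset (F × F) := Finset.filter (fun AB =>
      ((AB.1 ∩ AB.2).card ≤ 1 ∧ ∀ a ∈ AB.1, ∀ b ∈ AB.2, a ≤ b) ∧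
        AB.1.card + AB.2.card = 4) Finset.univ with hS
  set T : Finset ((ℕ × F) ⊕ (ℕ × F)) :=
    (Finset.range 5 ×ˢ (Finset.univ : F).powersetCard 4).disjSum
      (Finset.range 3 ×ˢ (Finset.univ : F).powersetCard 3) with hT
  have memS : ∀ AB : F × F, AB ∈ S ↔
      ((AB.1 ∩ AB.2).card ≤ 1 ∧ ∀ a ∈ AB.1, ∀ b ∈ AB.2, a ≤ b) ∧
        AB.1.card + AB.2.card = 4 := by
    intro AB; simp [hS]
  -- the forward map
  set i : F × F → (ℕ × F) ⊕ (ℕ × F) := fun AB =>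
    if AB.1 ∩ AB.2 = ∅ then Sum.inl (AB.1.card, AB.1 ∪ AB.2)
    else Sum.inr (AB.1.card - 1, AB.1 ∪ AB.2) with hi
  -- the backward map
  set j : (ℕ × F) ⊕ (ℕ × F) → F × F := fun x =>
    match x with
    | Sum.inl (k, s) => (((s.sort (· ≤ ·)).take k).toFinset,
        ((s.sort (· ≤ ·)).drop k).toFinset)
    | Sum.inr (k, s) => (((s.sort (· ≤ ·)).take (k + 1)).toFinset,
        ((s.sort (· ≤ ·)).drop k).toFinset) with hj
  have hST : S.card = T.card := by
    apply le_antisymm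
    · apply Finset.card_le_card_of_injOn i
      · intro AB hAB
        obtain ⟨⟨hI, hord⟩, hc4⟩ := (memS AB).mp hAB
        obtain ⟨A, B⟩ := AB
        simp only at hI hord hc4 ⊢
        have hcUI := Finset.card_union_add_card_inter A B
        by_cases hd : A ∩ B = ∅
        · simp only [hi, hd, if_pos]
          rw [Finset.mem_coe, Finset.inl_mem_disjSum, Finset.mem_product]
          have hI0 : (A ∩ B).card = 0 := by rw [hd]; simp
          refine ⟨Finset.mem_range.mpr (by omega), Finset.mem_powersetCard.mpr
            ⟨Finset.subset_univ _, show (A ∪ B).card = 4 by omega⟩⟩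
        · simp only [hi, hd, if_neg, if_false]
          rw [Finset.mem_coe, Finset.inr_mem_disjSum, Finset.mem_product]
          have hI1 : (A ∩ B).card = 1 := by
            have : (A ∩ B).card ≠ 0 := by
              simpa [Finset.card_eq_zero] using hd
            omega
          have hA1 : 1 ≤ A.card := by
            have : (A ∩ B).card ≤ A.card := Finset.card_le_card (Finset.inter_subset_left)
            omega
          have hB1 : 1 ≤ B.card := by
            have : (A ∩ B).card ≤ B.card := Finset.card_le_card (Finset.inter_subset_right)
            omega
          refine ⟨Finset.mem_range.mpr (by omega), Finset.mem_powersetCard.mpr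
            ⟨Finset.subset_univ _, show (A ∪ B).card = 3 by omega⟩⟩
      · intro p₁ hp₁ p₂ hp₂ heq
        simp only [Finset.mem_coe] at hp₁ hp₂
        obtain ⟨⟨hI₁, hord₁⟩, hc₁⟩ := (memS p₁).mp hp₁
        obtain ⟨⟨hI₂, hord₂⟩, hc₂⟩ := (memS p₂).mp hp₂
        obtain ⟨A₁, B₁⟩ := p₁
        obtain ⟨A₂, B₂⟩ := p₂
        simp only at hI₁ hord₁ hc₁ hI₂ hord₂ hc₂
        simp only [hi] at heq
        by_cases hd₁ : A₁ ∩ B₁ = ∅ <;> by_cases hd₂ : A₂ ∩ B₂ = ∅ <;>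
          simp only [hd₁, hd₂, if_pos, if_neg, if_true, if_false, reduceCtorEq,
            Sum.inl.injEq, Sum.inr.injEq, Prod.mk.injEq] at heq
        · -- both disjoint
          obtain ⟨hck, hU⟩ := heq
          have hA : A₁ = A₂ := left_unique hord₁ hord₂ hU hck
          have hB : B₁ = B₂ := by
            have e₁ : B₁ = (A₁ ∪ B₁) \ A₁ :=
              (Finset.union_sdiff_cancel_left
                (Finset.disjoint_iff_inter_eq_empty.mpr hd₁)).symm
            have e₂ : B₂ = (A₂ ∪ B₂) \ A₂ :=
              (Finset.union_sdiff_cancel_left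
                (Finset.disjoint_iff_inter_eq_empty.mpr hd₂)).symm
            rw [e₁, e₂, hU, hA]
          rw [hA, hB]
        · -- both have intersection of card one
          obtain ⟨hck, hU⟩ := heq
          have h1 : (A₁ ∩ B₁).card = 1 := by
            have : (A₁ ∩ B₁).card ≠ 0 := by simpa [Finset.card_eq_zero] using hd₁
            omega
          have h2 : (A₂ ∩ B₂).card = 1 := by
            have : (A₂ ∩ B₂).card ≠ 0 := by simpa [Finset.card_eq_zero] using hd₂
            omega
          obtain ⟨p₁, hp1⟩ := Finset.card_eq_one.mp h1
          obtain ⟨p₂, hp2⟩ := Finset.card_eq_one.mp h2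
          have hp1m : p₁ ∈ A₁ ∩ B₁ := hp1 ▸ Finset.mem_singleton_self _
          have hp2m : p₂ ∈ A₂ ∩ B₂ := hp2 ▸ Finset.mem_singleton_self _
          have hA1c : 1 ≤ A₁.card :=
            Finset.card_pos.mpr ⟨p₁, (Finset.mem_inter.mp hp1m).1⟩
          have hA2c : 1 ≤ A₂.card :=
            Finset.card_pos.mpr ⟨p₂, (Finset.mem_inter.mp hp2m).1⟩
          have hck' : A₁.card = A₂.card := by omega
          have hA : A₁ = A₂ := left_unique hord₁ hord₂ hU hck'
          have hpp : p₁ = p₂ := by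
            have l1 : p₁ ≤ p₂ := hord₂ p₁ (hA ▸ (Finset.mem_inter.mp hp1m).1) p₂
              (Finset.mem_inter.mp hp2m).2
            have l2 : p₂ ≤ p₁ := hord₁ p₂ (hA ▸ (Finset.mem_inter.mp hp2m).1) p₁
              (Finset.mem_inter.mp hp1m).2
            exact le_antisymm l1 l2
          have hB : B₁ = B₂ := by
            rw [B_eq_of_inter hp1, B_eq_of_inter hp2, hU, hA, hpp]
          rw [hA, hB]
    · apply Finset.card_le_card_of_injOn j
      · intro x hx
        match x with
        | Sum.inl (k, s) =>
          rw [hT, Finset.mem_coe, Finset.inl_mem_disjSum, Finset.mem_product] at hx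
          obtain ⟨hk, hs⟩ := hx
          rw [Finset.mem_range] at hk
          obtain ⟨-, hsc⟩ := Finset.mem_powersetCard.mp hs
          rw [Finset.mem_coe, memS]
          simp only [hj]
          set l := s.sort (· ≤ ·) with hl
          have hlen : l.length = 4 := by rw [hl, Finset.length_sort, hsc]
          have hnd : l.Nodup := s.sort_nodup _
          have hsorted : l.Pairwise (· ≤ ·) := s.pairwise_sort _
          have hdisj : (l.take k).toFinset ∩ (l.drop k).toFinset = ∅ := by
            rw [Finset.eq_empty_iff_forall_notMem]
            intro x hx
            rw [Finset.mem_inter, List.mem_toFinset, List.mem_toFinset] at hx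
            exact List.disjoint_take_drop hnd le_rfl hx.1 hx.2
          refine ⟨⟨by rw [hdisj]; simp, ?_⟩, ?_⟩
          · intro a ha b hb
            rw [List.mem_toFinset] at ha hb
            exact take_drop_le' hsorted (Nat.le_succ k) ha hb
          · rw [take_toFinset_card l hnd, drop_toFinset_card l hnd, hlen]
            omega
        | Sum.inr (k, s) =>
          rw [hT, Finset.mem_coe, Finset.inr_mem_disjSum, Finset.mem_product] at hx
          obtain ⟨hk, hs⟩ := hx
          rw [Finset.mem_range] at hk
          obtain ⟨-, hsc⟩ := Finset.mem_powersetCard.mp hs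
          rw [Finset.mem_coe, memS]
          simp only [hj]
          set l := s.sort (· ≤ ·) with hl
          have hlen : l.length = 3 := by rw [hl, Finset.length_sort, hsc]
          have hnd : l.Nodup := s.sort_nodup _
          have hsorted : l.Pairwise (· ≤ ·) := s.pairwise_sort _
          have hcA : (l.take (k + 1)).toFinset.card = k + 1 := by
            rw [take_toFinset_card l hnd, hlen]; omega
          have hcB : (l.drop k).toFinset.card = 3 - k := by
            rw [drop_toFinset_card l hnd, hlen]
          have hcsum : (l.take (k + 1)).toFinset.card + (l.drop k).toFinset.card = 4 := by
            rw [hcA, hcB]; omega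
          refine ⟨⟨?_, ?_⟩, hcsum⟩
          · have hU : (l.take (k + 1)).toFinset ∪ (l.drop k).toFinset = l.toFinset :=
              union_take_drop l (Nat.le_succ k)
            have hUc : ((l.take (k + 1)).toFinset ∪ (l.drop k).toFinset).card = 3 := by
              rw [hU, List.toFinset_card_of_nodup hnd, hlen]
            have := Finset.card_union_add_card_inter (l.take (k + 1)).toFinset
              (l.drop k).toFinset
            omega
          · intro a ha b hb
            rw [List.mem_toFinset] at ha hb
            exact take_drop_le' hsorted le_rfl ha hb
      · intro x hx y hy heq
        simp only [Finset.mem_coe, hT] at hx hy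
        -- helper facts
        have getmem : ∀ (s : F) (k : ℕ) (hk : k < (s.sort (· ≤ ·)).length),
            (s.sort (· ≤ ·))[k]'hk ∈ ((s.sort (· ≤ ·)).take (k + 1)).toFinset ∩
              ((s.sort (· ≤ ·)).drop k).toFinset := by
          intro s k hk
          rw [Finset.mem_inter, List.mem_toFinset, List.mem_toFinset]
          constructor
          · exact List.mem_take_iff_getElem.mpr ⟨k, by omega, rfl⟩
          · refine List.mem_drop_iff_getElem.mpr ⟨0, by omega, ?_⟩
            congr 1
        have disj : ∀ (s : F) (k : ℕ),
            ((s.sort (· ≤ ·)).take k).toFinset ∩ ((s.sort (· ≤ ·)).drop k).toFinset = ∅ := by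
          intro s k
          rw [Finset.eq_empty_iff_forall_notMem]
          intro x hx
          rw [Finset.mem_inter, List.mem_toFinset, List.mem_toFinset] at hx
          exact List.disjoint_take_drop (s.sort_nodup _) le_rfl hx.1 hx.2
        match x, y with
        | Sum.inl (k₁, s₁), Sum.inl (k₂, s₂) =>
          rw [Finset.inl_mem_disjSum, Finset.mem_product] at hx hy
          obtain ⟨hk₁, hs₁⟩ := hx
          obtain ⟨hk₂, hs₂⟩ := hy
          rw [Finset.mem_range] at hk₁ hk₂
          obtain ⟨-, hsc₁⟩ := Finset.mem_powersetCard.mp hs₁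
          obtain ⟨-, hsc₂⟩ := Finset.mem_powersetCard.mp hs₂
          simp only [hj, Prod.mk.injEq] at heq
          obtain ⟨hA, hB⟩ := heq
          have hU : s₁ = s₂ := by
            have e₁ : ((s₁.sort (· ≤ ·)).take k₁).toFinset ∪
                ((s₁.sort (· ≤ ·)).drop k₁).toFinset = s₁ := by
              rw [union_take_drop _ le_rfl, Finset.sort_toFinset]
            have e₂ : ((s₂.sort (· ≤ ·)).take k₂).toFinset ∪
                ((s₂.sort (· ≤ ·)).drop k₂).toFinset = s₂ := by
              rw [union_take_drop _ le_rfl, Finset.sort_toFinset]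
            rw [← e₁, ← e₂, hA, hB]
          have hkk : k₁ = k₂ := by
            have c₁ : ((s₁.sort (· ≤ ·)).take k₁).toFinset.card = k₁ := by
              rw [take_toFinset_card _ (s₁.sort_nodup _), Finset.length_sort, hsc₁]
              omega
            have c₂ : ((s₂.sort (· ≤ ·)).take k₂).toFinset.card = k₂ := by
              rw [take_toFinset_card _ (s₂.sort_nodup _), Finset.length_sort, hsc₂]
              omega
            rw [← c₁, ← c₂, hA]
          rw [hU, hkk]
        | Sum.inl (k₁, s₁), Sum.inr (k₂, s₂) =>
          exfalso
          rw [Finset.inl_mem_disjSum, Finset.mem_product] at hx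
          rw [Finset.inr_mem_disjSum, Finset.mem_product] at hy
          obtain ⟨hk₂, hs₂⟩ := hy
          rw [Finset.mem_range] at hk₂
          obtain ⟨-, hsc₂⟩ := Finset.mem_powersetCard.mp hs₂
          simp only [hj, Prod.mk.injEq] at heq
          obtain ⟨hA, hB⟩ := heq
          have hlen₂ : (s₂.sort (· ≤ ·)).length = 3 := by rw [Finset.length_sort, hsc₂]
          have hmem := getmem s₂ k₂ (by omega)
          rw [← hA, ← hB, disj s₁ k₁] at hmem
          exact Finset.notMem_empty _ hmem
        | Sum.inr (k₁, s₁), Sum.inl (k₂, s₂) =>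
          exfalso
          rw [Finset.inr_mem_disjSum, Finset.mem_product] at hx
          rw [Finset.inl_mem_disjSum, Finset.mem_product] at hy
          obtain ⟨hk₁, hs₁⟩ := hx
          rw [Finset.mem_range] at hk₁
          obtain ⟨-, hsc₁⟩ := Finset.mem_powersetCard.mp hs₁
          simp only [hj, Prod.mk.injEq] at heq
          obtain ⟨hA, hB⟩ := heq
          have hlen₁ : (s₁.sort (· ≤ ·)).length = 3 := by rw [Finset.length_sort, hsc₁]
          have hmem := getmem s₁ k₁ (by omega)
          rw [hA, hB, disj s₂ k₂] at hmem
          exact Finset.notMem_empty _ hmem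
        | Sum.inr (k₁, s₁), Sum.inr (k₂, s₂) =>
          rw [Finset.inr_mem_disjSum, Finset.mem_product] at hx hy
          obtain ⟨hk₁, hs₁⟩ := hx
          obtain ⟨hk₂, hs₂⟩ := hy
          rw [Finset.mem_range] at hk₁ hk₂
          obtain ⟨-, hsc₁⟩ := Finset.mem_powersetCard.mp hs₁
          obtain ⟨-, hsc₂⟩ := Finset.mem_powersetCard.mp hs₂
          simp only [hj, Prod.mk.injEq] at heq
          obtain ⟨hA, hB⟩ := heq
          have hU : s₁ = s₂ := by
            have e₁ : ((s₁.sort (· ≤ ·)).take (k₁ + 1)).toFinset ∪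
                ((s₁.sort (· ≤ ·)).drop k₁).toFinset = s₁ := by
              rw [union_take_drop _ (Nat.le_succ _), Finset.sort_toFinset]
            have e₂ : ((s₂.sort (· ≤ ·)).take (k₂ + 1)).toFinset ∪
                ((s₂.sort (· ≤ ·)).drop k₂).toFinset = s₂ := by
              rw [union_take_drop _ (Nat.le_succ _), Finset.sort_toFinset]
            rw [← e₁, ← e₂, hA, hB]
          have hkk : k₁ = k₂ := by
            have c₁ : ((s₁.sort (· ≤ ·)).take (k₁ + 1)).toFinset.card = k₁ + 1 := by
              rw [take_toFinset_card _ (s₁.sort_nodup _), Finset.length_sort, hsc₁]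
              omega
            have c₂ : ((s₂.sort (· ≤ ·)).take (k₂ + 1)).toFinset.card = k₂ + 1 := by
              rw [take_toFinset_card _ (s₂.sort_nodup _), Finset.length_sort, hsc₂]
              omega
            have := c₁.symm.trans (by rw [hA, c₂])
            omega
          rw [hU, hkk]
  rw [hST]
  have hTc : T.card = 5 * Nat.choose (n + 1) 4 + 3 * Nat.choose (n + 1) 3 := by
    rw [hT, Finset.card_disjSum, Finset.card_product, Finset.card_product,
      Finset.card_range, Finset.card_range, Finset.card_powersetCard,
      Finset.card_powersetCard, Finset.card_univ, Fintype.card_fin]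
  rw [hTc]
  -- arithmetic
  have h4 : 24 * Nat.choose (n + 1) 4 = (n + 1).descFactorial 4 := by
    rw [Nat.descFactorial_eq_factorial_mul_choose]
    norm_num [Nat.factorial]
  have h3 : 6 * Nat.choose (n + 1) 3 = (n + 1).descFactorial 3 := by
    rw [Nat.descFactorial_eq_factorial_mul_choose]
    norm_num [Nat.factorial]
  have key : 24 * (5 * Nat.choose (n + 1) 4 + 3 * Nat.choose (n + 1) 3) =
      5 * (n + 1).descFactorial 4 + 12 * (n + 1).descFactorial 3 := by
    rw [← h4, ← h3]; ring
  rw [key]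
  obtain ⟨m, rfl⟩ : ∃ m, n = m + 1 := ⟨n - 1, by omega⟩
  rcases m with _ | l
  · norm_num [Nat.descFactorial]
  · simp only [Nat.descFactorial_succ, Nat.descFactorial_zero, Nat.sub_zero, mul_one]
    have e1 : l + 1 + 1 + 1 - 1 = l + 2 := by omega
    have e2 : l + 1 + 1 + 1 - 2 = l + 1 := by omega
    have e3 : l + 1 + 1 + 1 - 3 = l := by omega
    have e4 : l + 1 + 1 - 1 = l + 1 := by omega
    rw [e1, e2, e3, e4]
    ring
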